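/- Let K be a field of characteristic zero and ∂ = y ∂/∂x + z ∂/∂y on K[x,y,z]. Then the plinth ideal pl(∂) = Ker(∂) ∩ Im(∂) equals the principal ideal of Ker(∂) = K[z, y²−2xz] generated by z. -/

import Mathlib

open MvPolynomial

/-- The derivation `y ∂/∂x + z ∂/∂y` on `K[x,y,z]`, where `x = X 0`, `y = X 1`, `z = X 2`. -/
noncomputable def parabolicDerivation (K : Type*) [CommRing K] :
    Derivation K (MvPolynomial (Fin 3) K) (MvPolynomial (Fin 3) K) :=
  MvPolynomial.mkDerivation K ![X 1, X 2, 0]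

namespace ParabAux

/-- The weight: first coordinate is the `sl₂`-weight (`x ↦ -1, y ↦ 0, z ↦ 1`),
second is total degree. -/
def wt : Fin 3 → ℤ × ℤ := ![(-1, 1), (0, 1), (1, 1)]

lemma weight_wt (d : Fin 3 →₀ ℕ) :
    (Finsupp.weight wt) d = ((d 2 : ℤ) - (d 0 : ℤ), ((d 0 : ℤ) + d 1 + d 2)) := by
  rw [Finsupp.weight_apply, Finsupp.sum_fintype _ _ (fun i => zero_smul ℕ (wt i))]
  rw [Fin.sum_univ_three]
  simp only [wt, Matrix.cons_val_zero, Matrix.cons_val_one, Matrix.head_cons,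
    Matrix.cons_val_two, Matrix.tail_cons, Prod.smul_mk, smul_eq_mul, Prod.mk_add_mk,
    Prod.mk.injEq]
  push_cast
  constructor <;> ring

variable {K : Type*} [Field K] [CharZero K]

lemma weight_single_wt (i : Fin 3) : (Finsupp.weight wt) (Finsupp.single i 1) = wt i := by
  rw [Finsupp.weight_apply, Finsupp.sum_single_index (zero_smul ℕ (wt i)), one_smul]

/-- Generic lemma: a derivation whose values on variables are homogeneous of shifted weight
sends weighted-homogeneous polynomials to weighted-homogeneous polynomials. -/
lemma isWH_mkDerivation (g : Fin 3 → MvPolynomial (Fin 3) K) (m₀ : ℤ × ℤ)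
    (hg : ∀ i, IsWeightedHomogeneous wt (g i) (m₀ + wt i))
    {p : MvPolynomial (Fin 3) K} {n : ℤ × ℤ} (hp : IsWeightedHomogeneous wt p n) :
    IsWeightedHomogeneous wt (mkDerivation K g p) (m₀ + n) := by
  conv_lhs => rw [p.as_sum]
  rw [map_sum]
  apply IsWeightedHomogeneous.sum
  intro d hd
  rw [mkDerivation_monomial]
  rw [← mem_weightedHomogeneousSubmodule]
  apply Submodule.smul_mem
  rw [mem_weightedHomogeneousSubmodule, Finsupp.sum]
  apply IsWeightedHomogeneous.sum
  intro i hi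
  rw [smul_eq_mul]
  have hwd : (Finsupp.weight wt) d = n := hp (mem_support_iff.mp hd)
  have hle : Finsupp.single i 1 ≤ d := by
    rw [Finsupp.single_le_iff]
    exact Nat.one_le_iff_ne_zero.mpr (Finsupp.mem_support_iff.mp hi)
  have hmono : IsWeightedHomogeneous wt
      (monomial (d - Finsupp.single i 1) ((d i : K))) (n - wt i) := by
    apply isWeightedHomogeneous_monomial
    have hadd : (d - Finsupp.single i 1) + Finsupp.single i 1 = d := tsub_add_cancel_of_le hle
    have hw : (Finsupp.weight wt) (d - Finsupp.single i 1) + wt i = n := by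
      rw [← weight_single_wt i, ← map_add, hadd, hwd]
    exact eq_sub_of_add_eq hw
  have h2 := hmono.mul (hg i)
  rwa [show n - wt i + (m₀ + wt i) = m₀ + n by abel] at h2



/-- The "lowering" operator `f` of the sl₂-triple. -/
noncomputable def fD (K : Type*) [Field K] :
    Derivation K (MvPolynomial (Fin 3) K) (MvPolynomial (Fin 3) K) :=
  mkDerivation K ![0, C 2 * X 0, C 2 * X 1]

/-- The "Cartan" operator `h` of the sl₂-triple. -/
noncomputable def hD (K : Type*) [Field K] :
    Derivation K (MvPolynomial (Fin 3) K) (MvPolynomial (Fin 3) K) :=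
  mkDerivation K ![C (-2) * X 0, 0, C 2 * X 2]

lemma isWH_e {p : MvPolynomial (Fin 3) K} {n : ℤ × ℤ} (hp : IsWeightedHomogeneous wt p n) :
    IsWeightedHomogeneous wt (parabolicDerivation K p) (((1 : ℤ), (0 : ℤ)) + n) := by
  apply isWH_mkDerivation _ _ _ hp
  intro i
  fin_cases i
  · simpa [wt] using isWeightedHomogeneous_X (R := K) wt 1
  · simpa [wt] using isWeightedHomogeneous_X (R := K) wt 2
  · simpa [wt] using isWeightedHomogeneous_zero (R := K) wt _

lemma isWH_f {p : MvPolynomial (Fin 3) K} {n : ℤ × ℤ} (hp : IsWeightedHomogeneous wt p n) :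
    IsWeightedHomogeneous wt (fD K p) (((-1 : ℤ), (0 : ℤ)) + n) := by
  apply isWH_mkDerivation _ _ _ hp
  intro i
  fin_cases i
  · simpa [wt] using isWeightedHomogeneous_zero (R := K) wt _
  · have := (isWeightedHomogeneous_C wt (2 : K)).mul (isWeightedHomogeneous_X (R := K) wt 0)
    simpa [wt] using this
  · have := (isWeightedHomogeneous_C wt (2 : K)).mul (isWeightedHomogeneous_X (R := K) wt 1)
    simpa [wt] using this

lemma commutator_ef (p : MvPolynomial (Fin 3) K) :
    parabolicDerivation K (fD K p) - fD K (parabolicDerivation K (p)) = hD K p := by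
  have : ⁅parabolicDerivation K, fD K⁆ = hD K := by
    apply derivation_ext
    intro i
    fin_cases i <;>
      simp [Derivation.commutator_apply, parabolicDerivation, fD, hD, Derivation.leibniz]
  rw [← this, Derivation.commutator_apply]

lemma mono_mul_X (d : Fin 3 →₀ ℕ) (i : Fin 3) :
    (monomial (d - Finsupp.single i 1) ((d i : K))) * X i = ((d i : K)) • monomial d (1 : K) := by
  rcases Nat.eq_zero_or_pos (d i) with h | h
  · simp [h]
  · rw [X, monomial_mul, mul_one,
      tsub_add_cancel_of_le (by rwa [Finsupp.single_le_iff, Nat.one_le_iff_ne_zero,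
        ← Nat.pos_iff_ne_zero]), smul_monomial, smul_eq_mul, mul_one]

lemma term_eq (d : Fin 3 →₀ ℕ) (i : Fin 3) (c : K) :
    (monomial (d - Finsupp.single i 1) ((d i : K))) • (C c * X i)
      = C (c * (d i : K)) * monomial d 1 := by
  rw [smul_eq_mul, mul_left_comm, mono_mul_X, smul_eq_C_mul, ← mul_assoc, ← C_mul]

lemma hD_apply {p : MvPolynomial (Fin 3) K} {m dd : ℤ}
    (hp : IsWeightedHomogeneous wt p (m, dd)) :
    hD K p = (((2 * m : ℤ) : K)) • p := by
  conv_lhs => rw [p.as_sum]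
  conv_rhs => rw [p.as_sum]
  rw [map_sum, Finset.smul_sum]
  apply Finset.sum_congr rfl
  intro d hd
  have hwd : (Finsupp.weight wt) d = (m, dd) := hp (mem_support_iff.mp hd)
  rw [weight_wt d, Prod.mk.injEq] at hwd
  have h0 : ∀ i : Fin 3, (monomial (d - Finsupp.single i 1) (((0 : ℕ) : K)))
      • (![C (-2) * X 0, 0, C 2 * X 2] : Fin 3 → MvPolynomial (Fin 3) K) i = 0 := by
    intro i; simp
  rw [hD, mkDerivation_monomial, Finsupp.sum_fintype _ _ h0, Fin.sum_univ_three]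
  simp only [Matrix.cons_val_zero, Matrix.cons_val_one, Matrix.head_cons, Matrix.cons_val_two,
    Matrix.tail_cons]
  rw [term_eq, term_eq, smul_zero, add_zero]
  rw [show monomial d (coeff d p) = C (coeff d p) * monomial d 1 by
    rw [C_mul_monomial, mul_one]]
  rw [smul_eq_C_mul, smul_eq_C_mul]
  rw [← hwd.1]
  push_cast
  rw [show (2 * ((d 2 : K) - (d 0 : K))) = -2 * (d 0 : K) + 2 * (d 2 : K) by ring, C_add]
  ring


/-- `F` as a linear endomorphism, so that powers make sense. -/
noncomputable def F (K : Type*) [Field K] :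
    Module.End K (MvPolynomial (Fin 3) K) := (fD K).toLinearMap

lemma F_apply (p : MvPolynomial (Fin 3) K) : F K p = fD K p := rfl

lemma e_fD (v : MvPolynomial (Fin 3) K) {m dd : ℤ} (hv : IsWeightedHomogeneous wt v (m, dd)) :
    parabolicDerivation K (fD K v)
      = fD K (parabolicDerivation K v) + (((2 * m : ℤ) : K)) • v := by
  have h := commutator_ef (K := K) v
  rw [hD_apply hv] at h
  rw [sub_eq_iff_eq_add] at h
  rw [h]; ring

lemma sl2_identity : ∀ (n : ℕ) {m dd : ℤ} {v : MvPolynomial (Fin 3) K},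
    IsWeightedHomogeneous wt v (m, dd) →
    parabolicDerivation K ((F K ^ (n + 1)) v)
      = (F K ^ (n + 1)) (parabolicDerivation K v)
        + (((((n : ℤ) + 1) * (2 * m - n) : ℤ) : K)) • (F K ^ n) v := by
  intro n
  induction n with
  | zero =>
    intro m dd v hv
    simp only [zero_add, pow_one, pow_zero, Module.End.one_apply, Nat.cast_zero]
    rw [F_apply, e_fD v hv, F_apply]
    norm_num
  | succ n ih =>
    intro m dd v hv
    have hfv : IsWeightedHomogeneous wt (fD K v) (m - 1, dd) := by
      have h := isWH_f hv
      rwa [show (((-1 : ℤ), (0 : ℤ)) + (m, dd)) = (m - 1, dd) by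
        simp [Prod.ext_iff]; ring] at h
    have step : ∀ w : MvPolynomial (Fin 3) K, (F K ^ (n + 2)) w = (F K ^ (n + 1)) (fD K w) := by
      intro w
      rw [pow_succ, Module.End.mul_apply, F_apply]
    calc parabolicDerivation K ((F K ^ (n + 2)) v)
        = parabolicDerivation K ((F K ^ (n + 1)) (fD K v)) := by rw [step]
      _ = (F K ^ (n + 1)) (parabolicDerivation K (fD K v))
            + (((((n : ℤ) + 1) * (2 * (m - 1) - n) : ℤ) : K)) • (F K ^ n) (fD K v) := ih hfv
      _ = (F K ^ (n + 1)) (fD K (parabolicDerivation K v)) + ((2 * m : ℤ) : K) • (F K ^ (n + 1)) v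
            + (((((n : ℤ) + 1) * (2 * (m - 1) - n) : ℤ) : K)) • (F K ^ (n + 1)) v := by
        rw [e_fD v hv, map_add, map_smul,
          show (F K ^ n) (fD K v) = (F K ^ (n + 1)) v by
            rw [← F_apply, ← Module.End.mul_apply, ← pow_succ]]
      _ = (F K ^ (n + 1 + 1)) (parabolicDerivation K v)
            + ((((((n + 1 : ℕ) : ℤ) + 1) * (2 * m - ((n + 1 : ℕ) : ℤ)) : ℤ) : K)) • (F K ^ (n + 1)) v := by
        rw [← step, add_assoc, ← add_smul]
        have hsc : (((2 * m : ℤ) : K)) + ((((n : ℤ) + 1) * (2 * (m - 1) - n) : ℤ) : K)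
            = (((((n + 1 : ℕ) : ℤ) + 1) * (2 * m - ((n + 1 : ℕ) : ℤ)) : ℤ) : K) := by
          push_cast
          ring
        rw [hsc]

lemma isWH_F_pow (k : ℕ) {m dd : ℤ} {v : MvPolynomial (Fin 3) K}
    (hv : IsWeightedHomogeneous wt v (m, dd)) :
    IsWeightedHomogeneous wt ((F K ^ k) v) (m - k, dd) := by
  induction k with
  | zero => simpa using hv
  | succ k ih =>
    rw [pow_succ', Module.End.mul_apply, F_apply]
    have h := isWH_f ih
    rwa [show (((-1 : ℤ), (0 : ℤ)) + (m - k, dd)) = (m - (k + 1 : ℕ), dd) by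
      simp [Prod.ext_iff]; push_cast; ring] at h

lemma wh_zero {v : MvPolynomial (Fin 3) K} {m dd : ℤ}
    (hv : IsWeightedHomogeneous wt v (m, dd)) (h : m + dd < 0) : v = 0 := by
  ext d
  rw [coeff_zero]
  by_contra hc
  have hw := hv hc
  rw [weight_wt, Prod.mk.injEq] at hw
  omega

lemma F_nilpotent {v : MvPolynomial (Fin 3) K} {m dd : ℤ}
    (hv : IsWeightedHomogeneous wt v (m, dd)) : ∃ k : ℕ, (F K ^ k) v = 0 := by
  refine ⟨((m + dd).toNat + 1), wh_zero (isWH_F_pow _ hv) ?_⟩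
  push_cast
  omega

lemma smul_cast_eq_zero {c : ℤ} {v : MvPolynomial (Fin 3) K}
    (h : ((c : K)) • v = 0) (hc : c ≠ 0) : v = 0 := by
  rcases smul_eq_zero.mp h with h' | h'
  · exact absurd (Int.cast_eq_zero.mp h') hc
  · exact h'

lemma neg_weight_ker_aux : ∀ (k : ℕ) {m dd : ℤ} {v : MvPolynomial (Fin 3) K},
    IsWeightedHomogeneous wt v (m, dd) → parabolicDerivation K v = 0 → m < 0 →
    (F K ^ k) v = 0 → v = 0 := by
  intro k
  induction k with
  | zero => intro m dd v _ _ _ h; simpa using h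
  | succ k ih =>
    intro m dd v hv he hm h
    have hid := sl2_identity k hv
    rw [h, he, map_zero, map_zero, zero_add] at hid
    refine ih hv he hm (smul_cast_eq_zero hid.symm ?_)
    have h1 : (0 : ℤ) < (k : ℤ) + 1 := by positivity
    have h2 : 2 * m - (k : ℤ) < 0 := by omega
    exact mul_ne_zero (by omega) (by omega)

lemma neg_weight_ker {m dd : ℤ} {v : MvPolynomial (Fin 3) K}
    (hv : IsWeightedHomogeneous wt v (m, dd)) (he : parabolicDerivation K v = 0)
    (hm : m < 0) : v = 0 := by
  obtain ⟨k, hk⟩ := F_nilpotent hv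
  exact neg_weight_ker_aux k hv he hm hk

lemma zero_weight_fD_aux : ∀ (k : ℕ) {dd : ℤ} {v : MvPolynomial (Fin 3) K},
    IsWeightedHomogeneous wt v (0, dd) → parabolicDerivation K v = 0 →
    (F K ^ (k + 1)) v = 0 → fD K v = 0 := by
  intro k
  induction k with
  | zero => intro dd v _ _ h; rw [← F_apply]; simpa using h
  | succ k ih =>
    intro dd v hv he h
    have hid := sl2_identity (k + 1) hv
    rw [h, he, map_zero, map_zero, zero_add] at hid
    refine ih hv he (smul_cast_eq_zero hid.symm ?_)
    have h1 : (0 : ℤ) < (k : ℤ) + 1 + 1 := by positivity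
    exact mul_ne_zero (by omega) (by omega)

lemma zero_weight_fD {dd : ℤ} {v : MvPolynomial (Fin 3) K}
    (hv : IsWeightedHomogeneous wt v (0, dd)) (he : parabolicDerivation K v = 0) :
    fD K v = 0 := by
  obtain ⟨k, hk⟩ := F_nilpotent hv
  cases k with
  | zero =>
    have : v = 0 := by simpa using hk
    rw [this, map_zero]
  | succ k => exact zero_weight_fD_aux k hv he hk

lemma weight_zero_ker_im_aux : ∀ (k : ℕ) {dd : ℤ} {q : MvPolynomial (Fin 3) K},
    IsWeightedHomogeneous wt q (-1, dd) →
    parabolicDerivation K (parabolicDerivation K q) = 0 →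
    (F K ^ k) q = 0 → q = 0 := by
  intro k
  induction k with
  | zero => intro dd q _ _ h; simpa using h
  | succ k ih =>
    intro dd q hq he h
    have hv : IsWeightedHomogeneous wt (parabolicDerivation K q) (0, dd) := by
      have h' := isWH_e hq
      rwa [show (((1 : ℤ), (0 : ℤ)) + (-1, dd)) = ((0 : ℤ), dd) by simp [Prod.ext_iff]] at h'
    have hf : fD K (parabolicDerivation K q) = 0 := zero_weight_fD hv he
    have hid := sl2_identity k hq
    rw [h] at hid
    have hF : (F K ^ (k + 1)) (parabolicDerivation K q) = 0 := by
      rw [pow_succ, Module.End.mul_apply, F_apply, hf, map_zero]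
    rw [hF, map_zero, zero_add] at hid
    refine ih hq he (smul_cast_eq_zero hid.symm ?_)
    exact mul_ne_zero (by omega) (by omega)

lemma weight_zero_ker_im {dd : ℤ} {q : MvPolynomial (Fin 3) K}
    (hq : IsWeightedHomogeneous wt q (-1, dd))
    (he : parabolicDerivation K (parabolicDerivation K q) = 0) :
    parabolicDerivation K q = 0 := by
  obtain ⟨k, hk⟩ := F_nilpotent hq
  rw [weight_zero_ker_im_aux k hq he hk, map_zero]


lemma comp_E (r : MvPolynomial (Fin 3) K) (μ : ℤ × ℤ) :
    weightedHomogeneousComponent wt (((1 : ℤ), (0 : ℤ)) + μ) (parabolicDerivation K r)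
      = parabolicDerivation K (weightedHomogeneousComponent wt μ r) := by
  classical
  conv_lhs => rw [← sum_weightedHomogeneousComponent wt r]
  rw [finsum_eq_sum _ (weightedHomogeneousComponent_finsupp r), map_sum, map_sum]
  rw [Finset.sum_eq_single μ]
  · exact (isWH_e (weightedHomogeneousComponent_isWeightedHomogeneous μ r)).weightedHomogeneousComponent_same
  · intro ν _ hν
    refine (isWH_e (weightedHomogeneousComponent_isWeightedHomogeneous ν r)).weightedHomogeneousComponent_ne _ ?_
    intro h
    exact hν (add_left_cancel h).symm
  · intro h
    have : weightedHomogeneousComponent wt μ r = 0 := by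
      by_contra h0
      exact h ((Set.Finite.mem_toFinset (hs := weightedHomogeneousComponent_finsupp r)).mpr h0)
    rw [this, map_zero, map_zero]

end ParabAux


open ParabAux

/-- For `∂ = y ∂/∂x + z ∂/∂y` on `K[x,y,z]` (`K` of characteristic zero), the
plinth ideal `pl(∂) = Ker ∂ ∩ Im ∂` is the principal ideal of `Ker ∂` generated by `z`. -/
theorem parabolicDerivation_plinth (K : Type*) [Field K] [CharZero K] :
    ∀ p : MvPolynomial (Fin 3) K,
      (parabolicDerivation K p = 0 ∧ p ∈ Set.range ⇑(parabolicDerivation K)) ↔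
      ∃ k : MvPolynomial (Fin 3) K, parabolicDerivation K k = 0 ∧ p = k * X 2 := by
  intro p
  have heX2 : parabolicDerivation K (X 2) = 0 := by
    rw [parabolicDerivation, mkDerivation_X]
    simp
  constructor
  · rintro ⟨hker, q, hq⟩
    have hdvd : X 2 ∣ p := by
      conv_rhs => rw [← sum_weightedHomogeneousComponent ParabAux.wt p]
      rw [finsum_eq_sum _ (weightedHomogeneousComponent_finsupp p)]
      refine Finset.dvd_sum ?_
      rintro ⟨m, dd⟩ _
      have hhom : IsWeightedHomogeneous wt (weightedHomogeneousComponent wt (m, dd) p) (m, dd) :=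
        weightedHomogeneousComponent_isWeightedHomogeneous _ _
      have hEpm : parabolicDerivation K (weightedHomogeneousComponent wt (m, dd) p) = 0 := by
        rw [show ((m, dd) : ℤ × ℤ) = ((1 : ℤ), (0 : ℤ)) + (m - 1, dd) by
            simp [Prod.ext_iff]] at hhom ⊢
        rw [← comp_E, hker, map_zero]
      rcases lt_trichotomy m 0 with hm | hm | hm
      · rw [neg_weight_ker hhom hEpm hm]
        exact dvd_zero _
      · subst hm
        have hq1 : IsWeightedHomogeneous wt (weightedHomogeneousComponent wt (-1, dd) q) (-1, dd) :=
          weightedHomogeneousComponent_isWeightedHomogeneous _ _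
        have hrep : weightedHomogeneousComponent wt ((0 : ℤ), dd) p
            = parabolicDerivation K (weightedHomogeneousComponent wt (-1, dd) q) := by
          rw [← hq, show (((0 : ℤ), dd) : ℤ × ℤ) = ((1 : ℤ), (0 : ℤ)) + (-1, dd) by
            simp [Prod.ext_iff], comp_E]
        rw [hrep, weight_zero_ker_im hq1 (by rw [← hrep]; exact hEpm)]
        exact dvd_zero _
      · rw [(weightedHomogeneousComponent wt (m, dd) p).as_sum]
        refine Finset.dvd_sum fun d hd => ?_
        refine X_dvd_monomial.mpr (Or.inr ?_)
        have hw := hhom (mem_support_iff.mp hd)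
        rw [weight_wt, Prod.mk.injEq] at hw
        omega
    obtain ⟨k, hk⟩ := hdvd
    have h2 : parabolicDerivation K p = X 2 * parabolicDerivation K k := by
      rw [hk, Derivation.leibniz, heX2, smul_zero, add_zero, smul_eq_mul]
    rw [hker] at h2
    exact ⟨k, (mul_eq_zero.mp h2.symm).resolve_left (X_ne_zero 2), by rw [hk, mul_comm]⟩
  · rintro ⟨k, hk, rfl⟩
    have heX1 : parabolicDerivation K (X 1) = X 2 := by
      rw [parabolicDerivation, mkDerivation_X]
      simp
    constructor
    · rw [Derivation.leibniz, hk, heX2, smul_zero, smul_zero, add_zero]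
    · refine ⟨k * X 1, ?_⟩
      rw [Derivation.leibniz, hk, heX1, smul_zero, add_zero, smul_eq_mul, mul_comm]
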